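/- Let n ≥ 1 and let H_1, …, H_m be symmetric n×n complex matrices such that for all α, β ∈ {1, …, m}, every vector v ∈ ℂⁿ, and all indices i, j, one has (H_α v)_i·(H_β v)_j = (H_α v)_j·(H_β v)_i (i.e. the vectors H_α v and H_β v are linearly dependent for every v). Then the ℂ-linear span of {H_1, …, H_m} inside the space of n×n complex matrices has dimension at most 1. -/

import Mathlib

private lemma aux_wedge {n : ℕ} (a b : Fin n → ℂ) (i0 : Fin n) (ha : a i0 ≠ 0)
    (h : ∀ i j, a i * b j = a j * b i) : b = (b i0 / a i0) • a := by
  funext j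
  have := h i0 j
  simp only [Pi.smul_apply, smul_eq_mul]
  field_simp
  linear_combination this

private lemma aux_key {n : ℕ} (A B : Matrix (Fin n) (Fin n) ℂ)
    (hA : A.IsSymm) (hB : B.IsSymm) (u : Fin n → ℂ) (i0 : Fin n)
    (ha : A.mulVec u i0 ≠ 0) (hBu : B.mulVec u = 0)
    (h : ∀ (v : Fin n → ℂ) (i j : Fin n),
      A.mulVec v i * B.mulVec v j = A.mulVec v j * B.mulVec v i) :
    B = 0 := by
  set a : Fin n → ℂ := A.mulVec u with haa
  -- Step 1: polarization: a ∧ (B w) = 0 for all w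
  have hw : ∀ (w : Fin n → ℂ) (i j : Fin n), a i * B.mulVec w j = a j * B.mulVec w i := by
    intro w i j
    have h1 := h (u + w) i j
    have h2 := h w i j
    simp only [Matrix.mulVec_add, hBu, Pi.add_apply, Pi.zero_apply, zero_add] at h1
    linear_combination h1 - h2
  -- Step 2: entries of B
  have hent : ∀ i k : Fin n, a i0 * B i k = a i * B i0 k := by
    intro i k
    have := hw (Pi.single k 1) i0 i
    simpa using this
  -- Step 3: B i k = λ * a i * a k
  set l : ℂ := B i0 i0 / (a i0 * a i0) with hl
  have hB2 : ∀ i k : Fin n, B i k = l * a i * a k := by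
    intro i k
    have e1 := hent i k
    have e2 := hent k i0
    have e3 : B i0 k = B k i0 := hB.apply k i0
    have key : a i0 * (a i0 * B i k) = a i * a k * B i0 i0 := by
      linear_combination a i0 * e1 + a i * e2 + (a i * a i0) * e3
    rw [hl]
    field_simp
    linear_combination key
  -- Step 4: λ * ⟨a,u⟩ = 0
  have hBv : ∀ (v : Fin n → ℂ) (i : Fin n), B.mulVec v i = l * a i * (∑ k, a k * v k) := by
    intro v i
    have : B.mulVec v i = ∑ k, B i k * v k := rfl
    rw [this, Finset.mul_sum]
    exact Finset.sum_congr rfl fun k _ => by rw [hB2]; ring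
  have hS : l * (∑ k, a k * u k) = 0 := by
    have := hBv u i0
    rw [congrFun hBu i0] at this
    rcases mul_eq_zero.mp this.symm with h' | h'
    · rcases mul_eq_zero.mp h' with h'' | h''
      · rw [h'']; ring
      · exact absurd h'' ha
    · rw [h']; ring
  by_cases hl0 : l = 0
  · ext i k; rw [hB2 i k, hl0]; simp
  have hSu : (∑ k, a k * u k) = 0 := by
    rcases mul_eq_zero.mp hS with h' | h'
    · exact absurd h' hl0
    · exact h'
  -- Step 5: (a⬝v) * (Av i * a j - Av j * a i) = 0
  have h5 : ∀ (v : Fin n → ℂ) (i j : Fin n),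
      (∑ k, a k * v k) * (A.mulVec v i * a j - A.mulVec v j * a i) = 0 := by
    intro v i j
    have := h v i j
    rw [hBv v j, hBv v i] at this
    have : l * ((∑ k, a k * v k) * (A.mulVec v i * a j - A.mulVec v j * a i)) = 0 := by
      linear_combination this
    rcases mul_eq_zero.mp this with h' | h'
    · exact absurd h' hl0
    · exact h'
  -- Step 6: Av ∧ a = 0 for all v
  have h6 : ∀ (v : Fin n → ℂ) (i j : Fin n), A.mulVec v i * a j = A.mulVec v j * a i := by
    intro v i j
    set v0 : Fin n → ℂ := Pi.single i0 1 with hv0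
    have hT0 : (∑ k, a k * v0 k) = a i0 := by simp [hv0, Pi.single_apply, mul_ite]
    have g0 : A.mulVec v0 i * a j - A.mulVec v0 j * a i = 0 := by
      have := h5 v0 i j
      rw [hT0] at this
      rcases mul_eq_zero.mp this with h' | h'
      · exact absurd h' ha
      · exact h'
    have hvv := h5 (v + v0) i j
    have hsum : (∑ k, a k * (v + v0) k) = (∑ k, a k * v k) + a i0 := by
      rw [← hT0, ← Finset.sum_add_distrib]
      exact Finset.sum_congr rfl fun k _ => by simp [mul_add]
    rw [hsum, Matrix.mulVec_add] at hvv
    have hv := h5 v i j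
    have : a i0 * (A.mulVec v i * a j - A.mulVec v j * a i) = 0 := by
      simp only [Pi.add_apply] at hvv
      linear_combination hvv - hv - g0 * (∑ k, a k * v k) - g0 * a i0
    rcases mul_eq_zero.mp this with h' | h'
    · exact absurd h' ha
    · linear_combination h'
  -- Step 7: A = ν a aᵀ, contradiction with ⟨a,u⟩ = 0
  have hentA : ∀ i k : Fin n, a i0 * A i k = a i * A i0 k := by
    intro i k
    have := h6 (Pi.single k 1) i i0
    simpa [mul_comm] using this
  exfalso
  have hA2 : ∀ i k : Fin n, A i k = (A i0 i0 / (a i0 * a i0)) * a i * a k := by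
    intro i k
    have e1 := hentA i k
    have e2 := hentA k i0
    have e3 : A i0 k = A k i0 := hA.apply k i0
    have key : a i0 * (a i0 * A i k) = a i * a k * A i0 i0 := by
      linear_combination a i0 * e1 + a i * e2 + (a i * a i0) * e3
    field_simp
    linear_combination key
  have : a i0 = 0 := by
    have h1 : a i0 = ∑ k, A i0 k * u k := rfl
    rw [h1]
    have : ∀ k ∈ Finset.univ, A i0 k * u k
        = (A i0 i0 / (a i0 * a i0)) * a i0 * (a k * u k) := fun k _ => by
      rw [hA2 i0 k]; ring
    rw [Finset.sum_congr rfl this, ← Finset.mul_sum, hSu, mul_zero]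
  exact ha this

/-- Let `H_1, …, H_m` be symmetric `n×n` complex matrices such that for all `α, β`,
every vector `v`, and all indices `i, j`, one has
`(H_α v)_i·(H_β v)_j = (H_α v)_j·(H_β v)_i` (i.e. `H_α v` and `H_β v` are linearly
dependent for every `v`).  Then the `ℂ`-linear span of `{H_1, …, H_m}` in the space of
`n×n` complex matrices has dimension at most `1`. -/
theorem span_symmetric_hessians_dim_le_one {n m : ℕ} (hn : 1 ≤ n)
    (H : Fin m → Matrix (Fin n) (Fin n) ℂ)
    (hsymm : ∀ α, (H α).IsSymm)
    (h : ∀ (α β : Fin m) (v : Fin n → ℂ) (i j : Fin n),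
      (H α).mulVec v i * (H β).mulVec v j = (H α).mulVec v j * (H β).mulVec v i) :
    Module.finrank ℂ ↥(Submodule.span ℂ (Set.range H)) ≤ 1 := by
  by_cases hz : ∀ β, H β = 0
  · have hsp : Submodule.span ℂ (Set.range H) = ⊥ := by
      rw [Submodule.span_eq_bot]
      rintro x ⟨β, rfl⟩
      exact hz β
    rw [hsp]
    simp
  push_neg at hz
  obtain ⟨α0, hα0⟩ := hz
  set A := H α0 with hAdef
  obtain ⟨i0, j0, hij⟩ : ∃ i j, A i j ≠ 0 := by
    by_contra hc
    push_neg at hc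
    exact hα0 (by ext i j; exact hc i j)
  set u : Fin n → ℂ := Pi.single j0 1 with hu
  have hau : A.mulVec u i0 ≠ 0 := by simpa [hu] using hij
  -- every H β is a multiple of A
  have key : ∀ β, ∃ c : ℂ, H β = c • A := by
    intro β
    set c : ℂ := (H β).mulVec u i0 / A.mulVec u i0 with hc
    refine ⟨c, ?_⟩
    have hdep : (H β).mulVec u = c • A.mulVec u := by
      exact aux_wedge (A.mulVec u) ((H β).mulVec u) i0 hau (fun i j => h α0 β u i j)
    have hz' : H β - c • A = 0 := by
      apply aux_key A (H β - c • A) (hsymm α0)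
        (Matrix.IsSymm.sub (hsymm β) ((hsymm α0).smul c)) u i0 hau
      · rw [Matrix.sub_mulVec, Matrix.smul_mulVec, hdep, sub_self]
      · intro v i j
        have := h α0 β v i j
        simp only [Matrix.sub_mulVec, Matrix.smul_mulVec, Pi.sub_apply, Pi.smul_apply,
          smul_eq_mul]
        linear_combination this
    linear_combination (norm := abel) hz'
  have hle : Submodule.span ℂ (Set.range H) ≤ Submodule.span ℂ {A} := by
    rw [Submodule.span_le]
    rintro x ⟨β, rfl⟩
    obtain ⟨c, hc⟩ := key β
    rw [hc]
    exact Submodule.smul_mem _ _ (Submodule.mem_span_singleton_self A)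
  calc Module.finrank ℂ ↥(Submodule.span ℂ (Set.range H))
      ≤ Module.finrank ℂ ↥(Submodule.span ℂ {A}) := Submodule.finrank_mono hle
    _ = 1 := finrank_span_singleton hα0
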